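/- The function m has left derivative equal to 1 and right derivative equal to -1 at x = 0. Consequently the superdifferential of m at 0 equals the interval [-1, 1] and the subdifferential of m at 0 is empty; in particular m is not differentiable at 0. -/

import Mathlib

open Filter Topology

/-- Young-type inequality: `(3/4) t^{4/3} ≤ (λ/2) t² + 1/(4λ²)`. -/
lemma amgm_aux (t lam : ℝ) (ht : 0 ≤ t) (hl : 0 < lam) :
    (3/4) * t ^ ((4:ℝ)/3) ≤ (lam/2) * t^2 + 1/(4*lam^2) := by
  have h := Real.geom_mean_le_arith_mean2_weighted (by norm_num : (0:ℝ) ≤ 2/3)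
    (by norm_num : (0:ℝ) ≤ 1/3) (by positivity : (0:ℝ) ≤ lam * t^2)
    (by positivity : (0:ℝ) ≤ 1/lam^2) (by norm_num)
  have h1 : (t^2:ℝ) ^ ((2:ℝ)/3) = t ^ ((4:ℝ)/3) := by
    rw [← Real.rpow_natCast t 2, ← Real.rpow_mul ht]; norm_num
  have h2 : ((lam^2:ℝ)) ^ ((1:ℝ)/3) = lam ^ ((2:ℝ)/3) := by
    rw [← Real.rpow_natCast lam 2, ← Real.rpow_mul hl.le]; norm_num
  have hlp : (0:ℝ) < lam ^ ((2:ℝ)/3) := Real.rpow_pos_of_pos hl _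
  have key : (lam * t^2) ^ ((2:ℝ)/3) * (1/lam^2) ^ ((1:ℝ)/3) = t ^ ((4:ℝ)/3) := by
    rw [Real.mul_rpow hl.le (sq_nonneg t), Real.div_rpow zero_le_one (sq_nonneg lam),
      Real.one_rpow, h1, h2]
    field_simp
  rw [key] at h
  have hl2 : (0:ℝ) < lam^2 := by positivity
  have e : 1/(4*lam^2) = (3/4) * ((1/3) * (1/lam^2)) := by
    field_simp
  nlinarith [h]

/-- Lower bound for the integrand of the infimum defining `m`. -/
lemma g_lower_aux (x s δ : ℝ) (hδ : 0 < δ) :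
    -(1+δ)^2/4 - x^2/(2*δ) ≤ (1 / 2) * s ^ 2 - (3 / 4) * |s - x| ^ ((4 : ℝ) / 3) := by
  have h1δ : (0:ℝ) < 1 + δ := by linarith
  have hl : (0:ℝ) < 1/(1+δ) := by positivity
  have h1 := amgm_aux |s - x| (1/(1+δ)) (abs_nonneg _) hl
  rw [sq_abs] at h1
  have e1 : (1/(1+δ)/2) * (s-x)^2 = (s-x)^2 / (2*(1+δ)) := by
    field_simp
  have e2 : 1/(4*(1/(1+δ))^2) = (1+δ)^2/4 := by
    field_simp
  rw [e1, e2] at h1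
  have key : (s-x)^2 / (2*(1+δ)) ≤ s^2/2 + x^2/(2*δ) := by
    rw [div_add_div _ _ (by positivity : (2:ℝ) ≠ 0) (by positivity : (2*δ:ℝ) ≠ 0),
      div_le_div_iff₀ (by positivity) (by positivity)]
    nlinarith [sq_nonneg (δ*s + x)]
  linarith

noncomputable def mfun (x : ℝ) : ℝ :=
  ⨅ s : ℝ, ((1 / 2) * s ^ 2 - (3 / 4) * |s - x| ^ ((4 : ℝ) / 3))

lemma mfun_bdd (x : ℝ) :
    BddBelow (Set.range fun s : ℝ => (1 / 2) * s ^ 2 - (3 / 4) * |s - x| ^ ((4 : ℝ) / 3)) := by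
  refine ⟨-(1+1)^2/4 - x^2/(2*1), ?_⟩
  rintro y ⟨s, rfl⟩
  exact g_lower_aux x s 1 one_pos

lemma mfun_le (x s : ℝ) :
    mfun x ≤ (1 / 2) * s ^ 2 - (3 / 4) * |s - x| ^ ((4 : ℝ) / 3) :=
  ciInf_le (mfun_bdd x) s

lemma mfun_ge (x δ : ℝ) (hδ : 0 < δ) : -(1+δ)^2/4 - x^2/(2*δ) ≤ mfun x :=
  le_ciInf fun s => g_lower_aux x s δ hδ

lemma mfun_upper {x : ℝ} (h : |x| ≤ 1) : mfun x ≤ -1/4 - |x| := by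
  have hx1 : -1 ≤ x := neg_le_of_abs_le h
  have hx2 : x ≤ 1 := le_of_abs_le h
  rcases le_or_gt 0 x with hx | hx
  · have hb := one_add_mul_self_le_rpow_one_add (s := x) (by linarith)
      (p := (4:ℝ)/3) (by norm_num)
    have hle := mfun_le x (-1)
    have habs : |(-1:ℝ) - x| = 1 + x := by
      rw [abs_of_nonpos (by linarith)]; ring
    rw [habs] at hle
    rw [abs_of_nonneg hx]
    nlinarith [hle, hb]
  · have hb := one_add_mul_self_le_rpow_one_add (s := -x) (by linarith)
      (p := (4:ℝ)/3) (by norm_num)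
    have hle := mfun_le x 1
    have habs : |(1:ℝ) - x| = 1 + -x := by
      rw [abs_of_nonneg (by linarith)]; ring
    rw [habs] at hle
    rw [abs_of_neg hx]
    nlinarith [hle, hb]

lemma mfun_zero : mfun 0 = -1/4 := by
  refine le_antisymm ?_ ?_
  · have := mfun_upper (x := 0) (by norm_num)
    simpa using this
  · by_contra hlt
    push_neg at hlt
    obtain ⟨ε, hε0, hεlt⟩ : ∃ ε : ℝ, 0 < ε ∧ mfun 0 ≤ -1/4 - ε :=
      ⟨(-1/4 - mfun 0)/2, by linarith, by linarith⟩
    have hδ0 : 0 < min ε 1 := lt_min hε0 one_pos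
    have hge := mfun_ge 0 (min ε 1) hδ0
    have h0 : (0:ℝ)^2/(2*min ε 1) = 0 := by
      rw [div_eq_zero_iff]; left; norm_num
    rw [h0] at hge
    have hsq : (min ε 1) * (min ε 1) ≤ min ε 1 :=
      mul_le_of_le_one_right hδ0.le (min_le_right ε 1)
    have hle : min ε 1 ≤ ε := min_le_left ε 1
    nlinarith [hsq, hle, hge, hδ0, hεlt]

lemma mfun_lower {x : ℝ} (hx : x ≠ 0) : -1/4 - |x| - x^2/4 ≤ mfun x := by
  have hax : 0 < |x| := abs_pos.2 hx
  have h := mfun_ge x |x| hax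
  have e : x^2/(2*|x|) = |x|/2 := by
    field_simp
    linear_combination (-1 : ℝ) * sq_abs x
  rw [e] at h
  nlinarith [sq_abs x, h]

/-- `m` has left derivative `1` and right derivative `-1` at `0`; its superdifferential
at `0` (the set of `q` with `limsup_{x→0} (m x - m 0 - q x)/|x| ≤ 0`) equals `[-1,1]`,
its subdifferential at `0` is empty, and `m` is not differentiable at `0`. -/
theorem m_not_differentiable_at_zero :
    let m : ℝ → ℝ := fun x =>
      ⨅ s : ℝ, ((1 / 2) * s ^ 2 - (3 / 4) * |s - x| ^ ((4 : ℝ) / 3))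
    HasDerivWithinAt m 1 (Set.Iic 0) 0 ∧
    HasDerivWithinAt m (-1) (Set.Ici 0) 0 ∧
    {q : ℝ | ∀ ε : ℝ, 0 < ε →
        ∀ᶠ x in 𝓝[≠] (0 : ℝ), (m x - m 0 - q * (x - 0)) / |x - 0| ≤ ε}
      = Set.Icc (-1 : ℝ) 1 ∧
    {q : ℝ | ∀ ε : ℝ, 0 < ε →
        ∀ᶠ x in 𝓝[≠] (0 : ℝ), -ε ≤ (m x - m 0 - q * (x - 0)) / |x - 0|}
      = (∅ : Set ℝ) ∧
    ¬ DifferentiableAt ℝ m 0 := by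
  intro m
  have hm : ∀ x, m x = mfun x := fun _ => rfl
  have hm0 : m 0 = -1/4 := by rw [hm]; exact mfun_zero
  have hup : ∀ x : ℝ, |x| ≤ 1 → m x ≤ -1/4 - |x| := fun x h => (hm x) ▸ mfun_upper h
  have hlo : ∀ x : ℝ, x ≠ 0 → -1/4 - |x| - x^2/4 ≤ m x := fun x h => (hm x) ▸ mfun_lower h
  have hsmall : ∀ᶠ x in 𝓝 (0:ℝ), |x - 0| < 1 := eventually_abs_sub_lt 0 one_pos
  -- left derivative
  have hL : HasDerivWithinAt m 1 (Set.Iic 0) 0 := by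
    rw [hasDerivWithinAt_iff_tendsto_slope, Set.Iic_diff_right]
    apply tendsto_of_tendsto_of_tendsto_of_le_of_le'
      (g := fun _ : ℝ => (1:ℝ)) (h := fun x : ℝ => 1 - x/4)
    · exact tendsto_const_nhds
    · have hc : Tendsto (fun x : ℝ => 1 - x/4) (𝓝 0) (𝓝 (1 - 0/4)) :=
        (continuous_const.sub (continuous_id.div_const 4)).tendsto 0
      have := hc.mono_left (nhdsWithin_le_nhds (s := Set.Iio (0:ℝ)))
      simpa using this
    · filter_upwards [self_mem_nhdsWithin, hsmall.filter_mono nhdsWithin_le_nhds]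
        with x hx hx1
      have hxn : x < 0 := hx
      rw [sub_zero] at hx1
      have hub := hup x hx1.le
      rw [abs_of_neg hxn] at hub
      rw [slope_def_field, le_div_iff_of_neg (by linarith : x - 0 < (0:ℝ))]
      linarith
    · filter_upwards [self_mem_nhdsWithin, hsmall.filter_mono nhdsWithin_le_nhds]
        with x hx hx1
      have hxn : x < 0 := hx
      rw [sub_zero] at hx1
      have hlb := hlo x hxn.ne
      rw [abs_of_neg hxn] at hlb
      rw [slope_def_field, div_le_iff_of_neg (by linarith : x - 0 < (0:ℝ))]
      nlinarith [hlb]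
  -- right derivative
  have hR : HasDerivWithinAt m (-1) (Set.Ici 0) 0 := by
    rw [hasDerivWithinAt_iff_tendsto_slope, Set.Ici_sdiff_left]
    apply tendsto_of_tendsto_of_tendsto_of_le_of_le'
      (g := fun x : ℝ => -1 - x/4) (h := fun _ : ℝ => (-1:ℝ))
    · have hc : Tendsto (fun x : ℝ => -1 - x/4) (𝓝 0) (𝓝 (-1 - 0/4)) :=
        (continuous_const.sub (continuous_id.div_const 4)).tendsto 0
      have := hc.mono_left (nhdsWithin_le_nhds (s := Set.Ioi (0:ℝ)))
      simpa using this
    · exact tendsto_const_nhds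
    · filter_upwards [self_mem_nhdsWithin, hsmall.filter_mono nhdsWithin_le_nhds]
        with x hx hx1
      have hxp : 0 < x := hx
      rw [sub_zero] at hx1
      have hlb := hlo x hxp.ne'
      rw [abs_of_pos hxp] at hlb
      rw [slope_def_field, le_div_iff₀ (by linarith : (0:ℝ) < x - 0)]
      nlinarith [hlb]
    · filter_upwards [self_mem_nhdsWithin, hsmall.filter_mono nhdsWithin_le_nhds]
        with x hx hx1
      have hxp : 0 < x := hx
      rw [sub_zero] at hx1
      have hub := hup x hx1.le
      rw [abs_of_pos hxp] at hub
      rw [slope_def_field, div_le_iff₀ (by linarith : (0:ℝ) < x - 0)]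
      linarith
  refine ⟨hL, hR, ?_, ?_, ?_⟩
  -- superdifferential
  · ext q
    simp only [Set.mem_setOf_eq, Set.mem_Icc, sub_zero]
    constructor
    · intro h
      constructor
      · by_contra hq
        push_neg at hq
        have hA : 0 < -1 - q := by linarith
        have hε : 0 < (-1 - q)/2 := by linarith
        have E := (h _ hε).filter_mono
          (nhdsWithin_mono 0 fun x (hx : x ∈ Set.Ioi (0:ℝ)) => ne_of_gt hx)
        have E2 : ∀ᶠ x in 𝓝[>] (0:ℝ), x < min 1 (-1-q) :=
          (eventually_lt_nhds (lt_min one_pos hA)).filter_mono nhdsWithin_le_nhds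
        obtain ⟨x, ⟨hr, hlt⟩, hxpos⟩ := ((E.and E2).and self_mem_nhdsWithin).exists
        have hxp : (0:ℝ) < x := hxpos
        have hlb := hlo x hxp.ne'
        rw [abs_of_pos hxp] at hlb hr
        rw [div_le_iff₀ hxp] at hr
        have hxA : x < -1 - q := lt_of_lt_of_le hlt (min_le_right _ _)
        nlinarith [hlb, hm0, mul_lt_mul_of_pos_right hxA hxp, mul_pos hA hxp]
      · by_contra hq
        push_neg at hq
        have hA : 0 < q - 1 := by linarith
        have hε : 0 < (q - 1)/2 := by linarith
        have E := (h _ hε).filter_mono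
          (nhdsWithin_mono 0 fun x (hx : x ∈ Set.Iio (0:ℝ)) => ne_of_lt hx)
        have E2 : ∀ᶠ x in 𝓝[<] (0:ℝ), max (-1) (1-q) < x :=
          (eventually_gt_nhds (max_lt (by norm_num) (by linarith))).filter_mono
            nhdsWithin_le_nhds
        obtain ⟨x, ⟨hr, hlt⟩, hxneg⟩ := ((E.and E2).and self_mem_nhdsWithin).exists
        have hxn : x < (0:ℝ) := hxneg
        have hlb := hlo x hxn.ne
        rw [abs_of_neg hxn] at hlb hr
        rw [div_le_iff₀ (by linarith : (0:ℝ) < -x)] at hr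
        have hxA : 1 - q < x := lt_of_le_of_lt (le_max_right (-1) (1-q)) hlt
        nlinarith [hlb, hm0, mul_lt_mul_of_pos_right hxA (by linarith : (0:ℝ) < -x),
          mul_pos hA (by linarith : (0:ℝ) < -x)]
    · rintro ⟨h1, h2⟩ ε hε
      have E1 : ∀ᶠ x in 𝓝[≠] (0:ℝ), |x - 0| < 1 := hsmall.filter_mono nhdsWithin_le_nhds
      filter_upwards [E1, self_mem_nhdsWithin] with x hx1 hx0
      have hxne : x ≠ 0 := hx0
      rw [sub_zero] at hx1
      have hnum : m x - m 0 - q*x ≤ 0 := by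
        have hu := hup x hx1.le
        have hq : -(q*x) ≤ |x| := by
          have h3 : |q * x| ≤ |x| := by
            rw [abs_mul]
            have := mul_le_mul_of_nonneg_right
              ((abs_le.2 ⟨h1, h2⟩ : |q| ≤ 1)) (abs_nonneg x)
            simpa using this
          exact (neg_le_abs (q*x)).trans h3
        linarith
      have hle0 : (m x - m 0 - q*x)/|x| ≤ 0 :=
        div_nonpos_iff.mpr (Or.inr ⟨hnum, abs_nonneg x⟩)
      linarith
  -- subdifferential is empty
  · rw [Set.eq_empty_iff_forall_notMem]
    intro q hq
    simp only [Set.mem_setOf_eq, sub_zero] at hq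
    have E := hq (1/2) (by norm_num)
    -- positive side: q ≤ -1/2
    have hq1 : q ≤ -1/2 := by
      have Ep := E.filter_mono
        (nhdsWithin_mono 0 fun x (hx : x ∈ Set.Ioi (0:ℝ)) => ne_of_gt hx)
      have E2 : ∀ᶠ x in 𝓝[>] (0:ℝ), x < 1 :=
        (eventually_lt_nhds one_pos).filter_mono nhdsWithin_le_nhds
      obtain ⟨x, ⟨hr, hlt⟩, hxpos⟩ := ((Ep.and E2).and self_mem_nhdsWithin).exists
      have hxp : (0:ℝ) < x := hxpos
      have hu := hup x (by rw [abs_of_pos hxp]; linarith)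
      rw [abs_of_pos hxp] at hu hr
      rw [le_div_iff₀ hxp] at hr
      nlinarith [hu, hm0, mul_pos hxp hxp]
    -- negative side: q ≥ 1/2
    have hq2 : 1/2 ≤ q := by
      have En := E.filter_mono
        (nhdsWithin_mono 0 fun x (hx : x ∈ Set.Iio (0:ℝ)) => ne_of_lt hx)
      have E2 : ∀ᶠ x in 𝓝[<] (0:ℝ), (-1:ℝ) < x :=
        (eventually_gt_nhds (by norm_num)).filter_mono nhdsWithin_le_nhds
      obtain ⟨x, ⟨hr, hlt⟩, hxneg⟩ := ((En.and E2).and self_mem_nhdsWithin).exists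
      have hxn : x < (0:ℝ) := hxneg
      have hu := hup x (by rw [abs_of_neg hxn]; linarith)
      rw [abs_of_neg hxn] at hu hr
      rw [le_div_iff₀ (by linarith : (0:ℝ) < -x)] at hr
      nlinarith [hu, hm0, mul_pos (by linarith : (0:ℝ) < -x) (by linarith : (0:ℝ) < -x)]
    linarith
  -- not differentiable
  · intro hd
    have h1 : (1:ℝ) = deriv m 0 :=
      (uniqueDiffOn_Iic (0:ℝ) 0 Set.self_mem_Iic).eq_deriv _ hL
        hd.hasDerivAt.hasDerivWithinAt
    have h2 : (-1:ℝ) = deriv m 0 :=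
      (uniqueDiffOn_Ici (0:ℝ) 0 Set.self_mem_Ici).eq_deriv _ hR
        hd.hasDerivAt.hasDerivWithinAt
    linarith [h1, h2]
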